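/- Let f : ℝⁿ → ℝⁿ be C¹ with μ(J(x)) ≤ −c < 0 for all x, and suppose f is a bijection of ℝⁿ onto itself with unique zero x*. Then V(x) = |f(x)| is positive definite with respect to x* (V(x*) = 0 and V(x) > 0 for x ≠ x*) and radially unbounded (|x| → ∞ implies V(x) → ∞), and along any trajectory of ẋ = f(x), V decreases: V(x(t)) ≤ V(x(0)) e^{−ct}. -/

import Mathlib

open Matrix Filter Set Topology

/-- `N` is a norm on `ℝⁿ`. -/
def IsNorm {n : ℕ} (N : (Fin n → ℝ) → ℝ) : Prop :=
  (∀ v, N v = 0 ↔ v = 0) ∧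
  (∀ (c : ℝ) v, N (c • v) = |c| * N v) ∧
  (∀ u v, N (u + v) ≤ N u + N v)

/-- Operator (induced matrix) norm of `A` with respect to the vector norm `N`. -/
noncomputable def opNorm {n : ℕ} (N : (Fin n → ℝ) → ℝ)
    (A : Matrix (Fin n) (Fin n) ℝ) : ℝ :=
  sSup ((fun v => N (A.mulVec v)) '' {v | N v ≤ 1})

/-- Matrix measure (logarithmic norm): `μ(A) = lim_{h→0⁺} (‖I + hA‖ − 1)/h`. -/
noncomputable def matMeasure {n : ℕ} (N : (Fin n → ℝ) → ℝ)
    (A : Matrix (Fin n) (Fin n) ℝ) : ℝ :=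
  limUnder (𝓝[>] (0:ℝ)) (fun h => (opNorm N (1 + h • A) - 1) / h)

/-- The Jacobian matrix of `f` at `x`. -/
noncomputable def jac {n : ℕ} (f : (Fin n → ℝ) → (Fin n → ℝ)) (x : Fin n → ℝ) :
    Matrix (Fin n) (Fin n) ℝ :=
  LinearMap.toMatrix' (fderiv ℝ f x).toLinearMap

/-- Upper right Dini derivative. -/
noncomputable def diniUpper (φ : ℝ → ℝ) (t : ℝ) : ℝ :=
  limsup (fun h => (φ (t + h) - φ t) / h) (𝓝[>] (0:ℝ))

section Aux
variable {n : ℕ} {N : (Fin n → ℝ) → ℝ}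

theorem IsNorm.zero (hN : IsNorm N) : N 0 = 0 := (hN.1 0).2 rfl

theorem IsNorm.nonneg (hN : IsNorm N) (v : Fin n → ℝ) : 0 ≤ N v := by
  have h1 : N ((-1 : ℝ) • v) = N v := by rw [hN.2.1]; norm_num
  have h2 : N (v + (-1 : ℝ) • v) ≤ N v + N ((-1:ℝ) • v) := hN.2.2 _ _
  have : v + (-1 : ℝ) • v = 0 := by module
  rw [this, hN.zero, h1] at h2; linarith

theorem IsNorm.neg (hN : IsNorm N) (v : Fin n → ℝ) : N (-v) = N v := by
  have h1 : N ((-1 : ℝ) • v) = N v := by rw [hN.2.1]; norm_num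
  simpa using h1

theorem IsNorm.sub_le (hN : IsNorm N) (u v : Fin n → ℝ) : N u - N v ≤ N (u - v) := by
  have := hN.2.2 (u - v) v
  simp only [sub_add_cancel] at this
  linarith

theorem IsNorm.abs_sub_le (hN : IsNorm N) (u v : Fin n → ℝ) : |N u - N v| ≤ N (u - v) := by
  rw [abs_sub_le_iff]
  refine ⟨hN.sub_le u v, ?_⟩
  have := hN.sub_le v u
  rwa [← hN.neg (v - u), neg_sub] at this

theorem IsNorm.le_const_mul (hN : IsNorm N) :
    ∃ C : ℝ, 0 ≤ C ∧ ∀ v, N v ≤ C * ‖v‖ := by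
  refine ⟨∑ i, N (Pi.single i 1), Finset.sum_nonneg fun i _ => hN.nonneg _, fun v => ?_⟩
  have hv : v = ∑ i, v i • (Pi.single i (1:ℝ) : Fin n → ℝ) := by
    ext j; simp [Pi.single_apply]
  calc N v = N (∑ i, v i • (Pi.single i (1:ℝ) : Fin n → ℝ)) := by rw [← hv]
    _ ≤ ∑ i, N (v i • (Pi.single i (1:ℝ) : Fin n → ℝ)) := by
        classical
        refine Finset.le_sum_of_subadditive N hN.zero.le hN.2.2 _ _
    _ = ∑ i, |v i| * N (Pi.single i (1:ℝ)) := by simp [hN.2.1]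
    _ ≤ ∑ i, ‖v‖ * N (Pi.single i (1:ℝ)) := by
        refine Finset.sum_le_sum fun i _ => ?_
        exact mul_le_mul_of_nonneg_right (by simpa using norm_le_pi_norm v i) (hN.nonneg _)
    _ = (∑ i, N (Pi.single i (1:ℝ))) * ‖v‖ := by rw [← Finset.mul_sum, mul_comm]

theorem IsNorm.continuous (hN : IsNorm N) : Continuous N := by
  obtain ⟨C, hC0, hC⟩ := hN.le_const_mul
  refine Metric.continuous_iff.2 fun u ε hε => ⟨ε / (C + 1), by positivity, fun v hv => ?_⟩
  have h1 : |N v - N u| ≤ N (v - u) := hN.abs_sub_le v u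
  have h2 : N (v - u) ≤ C * ‖v - u‖ := hC _
  have h3 : ‖v - u‖ < ε / (C + 1) := by rwa [dist_eq_norm] at hv
  have : C * ‖v - u‖ < ε := by
    calc C * ‖v - u‖ ≤ C * (ε / (C+1)) := mul_le_mul_of_nonneg_left h3.le hC0
      _ < ε := by rw [mul_div_assoc', div_lt_iff₀ (by positivity)]; nlinarith
  calc dist (N v) (N u) = |N v - N u| := Real.dist_eq _ _
    _ ≤ N (v - u) := h1
    _ ≤ C * ‖v-u‖ := h2
    _ < ε := this

theorem IsNorm.const_mul_le (hN : IsNorm N) :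
    ∃ ε : ℝ, 0 < ε ∧ ∀ v, ε * ‖v‖ ≤ N v := by
  rcases isEmpty_or_nonempty (Fin n) with h | h
  · exact ⟨1, one_pos, fun v => by
      have : v = 0 := Subsingleton.elim _ _
      simp [this, hN.zero]⟩
  · have hsphere : IsCompact (Metric.sphere (0 : Fin n → ℝ) 1) := isCompact_sphere _ _
    have hne : (Metric.sphere (0 : Fin n → ℝ) 1).Nonempty :=
      NormedSpace.sphere_nonempty.2 zero_le_one
    obtain ⟨v₀, hv₀S, hv₀min'⟩ := hsphere.exists_isMinOn hne hN.continuous.continuousOn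
    have hv₀min : ∀ v ∈ Metric.sphere (0 : Fin n → ℝ) 1, N v₀ ≤ N v := fun v hv => hv₀min' hv
    have hv₀norm : ‖v₀‖ = 1 := by simpa using hv₀S
    have hv₀pos : 0 < N v₀ := by
      rcases (hN.nonneg v₀).lt_or_eq with h' | h'
      · exact h'
      · exfalso
        have : v₀ = 0 := (hN.1 v₀).1 h'.symm
        simp [this] at hv₀norm
    refine ⟨N v₀, hv₀pos, fun v => ?_⟩
    rcases eq_or_ne v 0 with rfl | hv
    · simp [hN.zero]
    · have hvn : ‖v‖ ≠ 0 := norm_ne_zero_iff.2 hv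
      have hmem : (‖v‖⁻¹ • v) ∈ Metric.sphere (0 : Fin n → ℝ) 1 := by
        simp [norm_smul, abs_of_nonneg (inv_nonneg.2 (norm_nonneg v)), inv_mul_cancel₀ hvn]
      have := hv₀min _ hmem
      have heq : N (‖v‖⁻¹ • v) = ‖v‖⁻¹ * N v := by
        rw [hN.2.1]; congr 1; rw [abs_of_nonneg (inv_nonneg.2 (norm_nonneg v))]
      rw [heq] at this
      have hpos : (0:ℝ) < ‖v‖ := lt_of_le_of_ne (norm_nonneg v) (Ne.symm hvn)
      calc N v₀ * ‖v‖ ≤ (‖v‖⁻¹ * N v) * ‖v‖ := by nlinarith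
        _ = N v := by field_simp

theorem opSet_nonempty (hN : IsNorm N) (A : Matrix (Fin n) (Fin n) ℝ) :
    ((fun v => N (A.mulVec v)) '' {v | N v ≤ 1}).Nonempty :=
  ⟨N (A.mulVec 0), ⟨0, by simp [hN.zero], rfl⟩⟩

theorem opSet_bddAbove (hN : IsNorm N) (A : Matrix (Fin n) (Fin n) ℝ) :
    BddAbove ((fun v => N (A.mulVec v)) '' {v | N v ≤ 1}) := by
  obtain ⟨C, hC0, hC⟩ := hN.le_const_mul
  obtain ⟨ε, hε0, hε⟩ := hN.const_mul_le
  set L := LinearMap.toContinuousLinearMap (Matrix.mulVecLin A)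
  refine ⟨C * ‖L‖ * ε⁻¹, fun y hy => ?_⟩
  obtain ⟨v, hv, rfl⟩ := hy
  have h1 : N (A.mulVec v) ≤ C * ‖A.mulVec v‖ := hC _
  have h2 : ‖A.mulVec v‖ = ‖L v‖ := rfl
  have h3 : ‖L v‖ ≤ ‖L‖ * ‖v‖ := L.le_opNorm v
  have hv1 : N v ≤ 1 := hv
  have h4 : ‖v‖ ≤ ε⁻¹ := by
    rw [← one_div, le_div_iff₀ hε0]
    nlinarith [hε v]
  calc N (A.mulVec v) ≤ C * ‖L v‖ := by rw [← h2]; exact h1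
    _ ≤ C * (‖L‖ * ‖v‖) := mul_le_mul_of_nonneg_left h3 hC0
    _ ≤ C * (‖L‖ * ε⁻¹) := by
        have := mul_le_mul_of_nonneg_left h4 (norm_nonneg L)
        exact mul_le_mul_of_nonneg_left this hC0
    _ = C * ‖L‖ * ε⁻¹ := by ring

theorem le_opNorm' (hN : IsNorm N) (A : Matrix (Fin n) (Fin n) ℝ) {v : Fin n → ℝ}
    (hv : N v ≤ 1) : N (A.mulVec v) ≤ opNorm N A :=
  le_csSup (opSet_bddAbove hN A) ⟨v, hv, rfl⟩

theorem opNorm_nonneg' (hN : IsNorm N) (A : Matrix (Fin n) (Fin n) ℝ) : 0 ≤ opNorm N A := by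
  have := le_opNorm' hN A (v := 0) (by simp [hN.zero])
  calc (0:ℝ) = N (A.mulVec 0) := by simp [hN.zero]
    _ ≤ _ := this

theorem opNorm_le' (hN : IsNorm N) (A : Matrix (Fin n) (Fin n) ℝ) {b : ℝ}
    (hb : ∀ v, N v ≤ 1 → N (A.mulVec v) ≤ b) : opNorm N A ≤ b := by
  refine csSup_le (opSet_nonempty hN A) ?_
  rintro y ⟨v, hv, rfl⟩
  exact hb v hv

theorem N_mulVec_le (hN : IsNorm N) (A : Matrix (Fin n) (Fin n) ℝ) (v : Fin n → ℝ) :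
    N (A.mulVec v) ≤ opNorm N A * N v := by
  rcases eq_or_ne v 0 with rfl | hv
  · simp [hN.zero]
  · have hNv : 0 < N v := (hN.nonneg v).lt_of_ne fun h => hv ((hN.1 v).1 h.symm)
    have hmem : N ((N v)⁻¹ • v) ≤ 1 := by
      rw [hN.2.1, abs_of_nonneg (inv_nonneg.2 hNv.le), inv_mul_cancel₀ hNv.ne']
    have := le_opNorm' hN A hmem
    have hsmul : A.mulVec ((N v)⁻¹ • v) = (N v)⁻¹ • A.mulVec v := by
      exact Matrix.mulVec_smul A ((N v)⁻¹) v
    rw [hsmul, hN.2.1, abs_of_nonneg (inv_nonneg.2 hNv.le)] at this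
    calc N (A.mulVec v) = N v * ((N v)⁻¹ * N (A.mulVec v)) := by field_simp
      _ ≤ N v * opNorm N A := mul_le_mul_of_nonneg_left this hNv.le
      _ = _ := mul_comm _ _

/-- The slope function whose limit is the matrix measure. -/
noncomputable def mslope {n : ℕ} (N : (Fin n → ℝ) → ℝ) (A : Matrix (Fin n) (Fin n) ℝ)
    (h : ℝ) : ℝ := (opNorm N (1 + h • A) - 1) / h

theorem one_add_smul_mulVec (A : Matrix (Fin n) (Fin n) ℝ) (h : ℝ) (v : Fin n → ℝ) :
    (1 + h • A).mulVec v = v + h • A.mulVec v := by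
  rw [Matrix.add_mulVec, Matrix.one_mulVec, Matrix.smul_mulVec]

theorem mslope_monotoneOn (hN : IsNorm N) (A : Matrix (Fin n) (Fin n) ℝ) :
    MonotoneOn (mslope N A) (Ioi (0:ℝ)) := by
  rintro h₁ (h₁pos : (0:ℝ) < h₁) h₂ (h₂pos : (0:ℝ) < h₂) h12
  set θ := h₁ / h₂ with hθ
  have hθ0 : 0 < θ := div_pos h₁pos h₂pos
  have hθ1 : θ ≤ 1 := (div_le_one h₂pos).2 h12
  have hθh : θ * h₂ = h₁ := div_mul_cancel₀ _ h₂pos.ne'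
  have hF2 : ∀ v, N v ≤ 1 → N ((1 + h₂ • A).mulVec v) ≤ opNorm N (1 + h₂ • A) :=
    fun v hv => le_opNorm' hN _ hv
  have key : opNorm N (1 + h₁ • A) ≤ (1 - θ) + θ * opNorm N (1 + h₂ • A) := by
    refine opNorm_le' hN _ fun v hv => ?_
    have hdecomp : (1 + h₁ • A).mulVec v
        = (1 - θ) • v + θ • ((1 + h₂ • A).mulVec v) := by
      rw [one_add_smul_mulVec, one_add_smul_mulVec]
      rw [smul_add, smul_smul, hθh]
      module
    rw [hdecomp]
    calc N ((1 - θ) • v + θ • ((1 + h₂ • A).mulVec v))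
        ≤ N ((1 - θ) • v) + N (θ • ((1 + h₂ • A).mulVec v)) := hN.2.2 _ _
      _ = |1 - θ| * N v + |θ| * N ((1 + h₂ • A).mulVec v) := by rw [hN.2.1, hN.2.1]
      _ ≤ (1 - θ) * 1 + θ * opNorm N (1 + h₂ • A) := by
          rw [abs_of_nonneg (by linarith : (0:ℝ) ≤ 1 - θ), abs_of_nonneg hθ0.le]
          have h5 := hF2 v hv
          have h6 := hN.nonneg v
          have h7 := hN.nonneg ((1 + h₂ • A).mulVec v)
          nlinarith
      _ = (1 - θ) + θ * opNorm N (1 + h₂ • A) := by ring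
  show (opNorm N (1 + h₁ • A) - 1) / h₁ ≤ (opNorm N (1 + h₂ • A) - 1) / h₂
  rw [div_le_div_iff₀ h₁pos h₂pos]
  have h2 : (opNorm N (1 + h₁ • A) - 1) ≤ θ * (opNorm N (1 + h₂ • A) - 1) := by
    have := key; ring_nf at this ⊢; linarith
  calc (opNorm N (1 + h₁ • A) - 1) * h₂ ≤ θ * (opNorm N (1 + h₂ • A) - 1) * h₂ :=
        mul_le_mul_of_nonneg_right h2 h₂pos.le
    _ = (θ * h₂) * (opNorm N (1 + h₂ • A) - 1) := by ring
    _ = (opNorm N (1 + h₂ • A) - 1) * h₁ := by rw [hθh]; ring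

theorem mslope_lower (hN : IsNorm N) (A : Matrix (Fin n) (Fin n) ℝ)
    {v₀ : Fin n → ℝ} (hv₀ : N v₀ = 1) {h : ℝ} (hh : 0 < h) :
    -(N (A.mulVec v₀)) ≤ mslope N A h := by
  have hF : 1 - h * N (A.mulVec v₀) ≤ opNorm N (1 + h • A) := by
    have h1 : N ((1 + h • A).mulVec v₀) ≤ opNorm N (1 + h • A) :=
      le_opNorm' hN _ hv₀.le
    have h2 : N v₀ ≤ N ((1 + h • A).mulVec v₀) + N (h • A.mulVec v₀) := by
      have := hN.2.2 ((1 + h • A).mulVec v₀) (-(h • A.mulVec v₀))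
      have hneg : N (-(h • A.mulVec v₀)) = N (h • A.mulVec v₀) := by
        have := hN.2.1 (-1 : ℝ) (h • A.mulVec v₀); simpa using this
      rw [one_add_smul_mulVec] at h1 ⊢
      calc N v₀ = N ((v₀ + h • A.mulVec v₀) + (-(h • A.mulVec v₀))) := by
            congr 1; module
        _ ≤ N (v₀ + h • A.mulVec v₀) + N (-(h • A.mulVec v₀)) := hN.2.2 _ _
        _ = N (v₀ + h • A.mulVec v₀) + N (h • A.mulVec v₀) := by rw [hneg]
    have h3 : N (h • A.mulVec v₀) = h * N (A.mulVec v₀) := by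
      rw [hN.2.1, abs_of_nonneg hh.le]
    rw [hv₀, h3] at h2
    linarith
  show -(N (A.mulVec v₀)) ≤ (opNorm N (1 + h • A) - 1) / h
  rw [le_div_iff₀ hh]
  nlinarith

theorem exists_unit (hN : IsNorm N) (hne : Nonempty (Fin n)) :
    ∃ v₀ : Fin n → ℝ, N v₀ = 1 := by
  obtain ⟨i⟩ := hne
  set e : Fin n → ℝ := Pi.single i 1 with he
  have he0 : e ≠ 0 := by
    intro h
    have := congrFun h i
    simp [he] at this
  have hNe : 0 < N e := (hN.nonneg e).lt_of_ne fun h => he0 ((hN.1 e).1 h.symm)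
  refine ⟨(N e)⁻¹ • e, ?_⟩
  rw [hN.2.1, abs_of_nonneg (inv_nonneg.2 hNe.le), inv_mul_cancel₀ hNe.ne']

theorem unit_smul (hN : IsNorm N) {u : Fin n → ℝ} (hu : u ≠ 0) : N ((N u)⁻¹ • u) = 1 := by
  have hNu : 0 < N u := (hN.nonneg u).lt_of_ne fun h => hu ((hN.1 u).1 h.symm)
  rw [hN.2.1, abs_of_nonneg (inv_nonneg.2 hNu.le), inv_mul_cancel₀ hNu.ne']

theorem matMeasure_tendsto (hN : IsNorm N) (A : Matrix (Fin n) (Fin n) ℝ)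
    (hne : Nonempty (Fin n)) :
    Tendsto (mslope N A) (𝓝[>] (0:ℝ)) (𝓝 (matMeasure N A)) ∧
      ∀ h, 0 < h → matMeasure N A ≤ mslope N A h := by
  obtain ⟨v₀, hv₀⟩ := exists_unit hN hne
  have bdd : BddBelow (mslope N A '' Ioi (0:ℝ)) := by
    refine ⟨-(N (A.mulVec v₀)), ?_⟩
    rintro y ⟨h, hh, rfl⟩
    exact mslope_lower hN A hv₀ hh
  have htend : Tendsto (mslope N A) (𝓝[>] (0:ℝ)) (𝓝 (sInf (mslope N A '' Ioi 0))) :=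
    (mslope_monotoneOn hN A).tendsto_nhdsGT bdd
  have hμ : matMeasure N A = sInf (mslope N A '' Ioi 0) := htend.limUnder_eq
  rw [hμ]
  exact ⟨htend, fun h hh => csInf_le bdd ⟨h, hh, rfl⟩⟩

theorem mulVec_ne_zero (hN : IsNorm N) (A : Matrix (Fin n) (Fin n) ℝ)
    (hm : matMeasure N A < 0) {u : Fin n → ℝ} (hu : u ≠ 0) : A.mulVec u ≠ 0 := by
  intro hAu
  have hne : Nonempty (Fin n) := by
    by_contra h
    exact hu (funext fun i => absurd ⟨i⟩ h)
  set v₀ := (N u)⁻¹ • u with hv₀def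
  have hv₀ : N v₀ = 1 := unit_smul hN hu
  have hAv₀ : A.mulVec v₀ = 0 := by
    rw [hv₀def, Matrix.mulVec_smul, hAu, smul_zero]
  have hge : ∀ h : ℝ, 0 < h → (0:ℝ) ≤ mslope N A h := by
    intro h hh
    have := mslope_lower hN A hv₀ hh
    rw [hAv₀, hN.zero] at this
    linarith
  obtain ⟨htend, -⟩ := matMeasure_tendsto hN A hne
  have : (0:ℝ) ≤ matMeasure N A := by
    refine ge_of_tendsto htend ?_
    filter_upwards [self_mem_nhdsWithin] with h hh
    exact hge h hh
  linarith

theorem jac_mulVec {f : (Fin n → ℝ) → (Fin n → ℝ)} {x v : Fin n → ℝ} :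
    (jac f x).mulVec v = fderiv ℝ f x v := by
  have h1 : (jac f x).mulVec v = Matrix.toLin' (jac f x) v := (Matrix.toLin'_apply _ _).symm
  rw [h1]
  show Matrix.toLin' (LinearMap.toMatrix' (fderiv ℝ f x).toLinearMap) v = _
  rw [Matrix.toLin'_toMatrix']
  rfl

section openmap
variable {f : (Fin n → ℝ) → (Fin n → ℝ)} (hf : ContDiff ℝ 1 f)
  (hinj : ∀ x : Fin n → ℝ, Function.Injective (fderiv ℝ f x))

theorem f_isOpenMap (hf : ContDiff ℝ 1 f)
    (hinj : ∀ x : Fin n → ℝ, Function.Injective (fderiv ℝ f x)) : IsOpenMap f := by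
  have hbij : ∀ x : Fin n → ℝ, Function.Bijective (fderiv ℝ f x) := fun x =>
    ⟨hinj x, (LinearMap.injective_iff_surjective (f := (fderiv ℝ f x).toLinearMap)).1 (hinj x)⟩
  let e : (Fin n → ℝ) → ((Fin n → ℝ) ≃L[ℝ] (Fin n → ℝ)) := fun x =>
    (LinearEquiv.ofBijective (fderiv ℝ f x).toLinearMap (hbij x)).toContinuousLinearEquiv
  have he : ∀ x, HasStrictFDerivAt f (e x : (Fin n → ℝ) →L[ℝ] (Fin n → ℝ)) x := by
    intro x
    have h1 : HasStrictFDerivAt f (fderiv ℝ f x) x := hf.hasStrictFDerivAt one_ne_zero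
    convert h1 using 2
    ext v; rfl
  exact isOpenMap_of_hasStrictFDerivAt_equiv he

theorem radially_unbounded (hN : IsNorm N) (hf : ContDiff ℝ 1 f)
    (hinj : ∀ x : Fin n → ℝ, Function.Injective (fderiv ℝ f x))
    (hbij : Function.Bijective f)
    (hNcont : Continuous N) (ε : ℝ) (hε0 : 0 < ε) (hε : ∀ v, ε * ‖v‖ ≤ N v)
    (M : ℝ) : ∃ R : ℝ, ∀ x, R ≤ N x → M ≤ N (f x) := by
  set homeo : (Fin n → ℝ) ≃ₜ (Fin n → ℝ) :=
    Equiv.toHomeomorphOfContinuousOpen (Equiv.ofBijective f hbij) hf.continuous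
      (f_isOpenMap hf hinj)
  set K : Set (Fin n → ℝ) := {y | N y ≤ M} with hK
  have hKclosed : IsClosed K := isClosed_le hNcont continuous_const
  have hKbounded : Bornology.IsBounded K := by
    refine (Metric.isBounded_iff_subset_closedBall 0).2 ⟨|M| / ε, fun y hy => ?_⟩
    have h1 : ε * ‖y‖ ≤ N y := hε y
    have h2 : N y ≤ M := hy
    simp only [Metric.mem_closedBall, dist_zero_right]
    rw [le_div_iff₀ hε0]
    calc ‖y‖ * ε = ε * ‖y‖ := mul_comm _ _
      _ ≤ M := h1.trans h2
      _ ≤ |M| := le_abs_self M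
  have hKcompact : IsCompact K := Metric.isCompact_of_isClosed_isBounded hKclosed hKbounded
  have hpre : f ⁻¹' K = homeo.symm '' K := by
    ext y
    simp only [mem_preimage, Homeomorph.image_symm, mem_preimage]
    rfl
  have hPcompact : IsCompact (f ⁻¹' K) := by
    rw [hpre]
    exact hKcompact.image homeo.symm.continuous
  have hbdd : BddAbove (N '' (f ⁻¹' K)) := (hPcompact.image hNcont).bddAbove
  obtain ⟨R₀, hR₀⟩ := hbdd
  refine ⟨R₀ + 1, fun x hx => ?_⟩
  by_contra hlt
  push_neg at hlt
  have hxP : x ∈ f ⁻¹' K := by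
    simp only [mem_preimage, hK, mem_setOf_eq]
    linarith
  have : N x ≤ R₀ := hR₀ ⟨x, hxP, rfl⟩
  linarith
end openmap

theorem decay (hN : IsNorm N) {f : (Fin n → ℝ) → (Fin n → ℝ)} (hf : ContDiff ℝ 1 f)
    {c : ℝ} (hc : 0 < c) (hμ : ∀ x, matMeasure N (jac f x) ≤ -c)
    (hne : Nonempty (Fin n))
    (x : ℝ → (Fin n → ℝ)) (hx : ∀ t ∈ Ici (0:ℝ), HasDerivWithinAt x (f (x t)) (Ici 0) t)
    (t : ℝ) (ht : t ∈ Ici (0:ℝ)) : N (f (x t)) ≤ N (f (x 0)) * Real.exp (-c * t) := by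
  set φ : ℝ → ℝ := fun τ => N (f (x τ)) with hφ
  have hxc : ContinuousOn x (Ici 0) := fun τ hτ => (hx τ hτ).continuousWithinAt
  have hφc : ContinuousOn φ (Icc 0 t) := by
    apply hN.continuous.comp_continuousOn
    exact hf.continuous.comp_continuousOn (hxc.mono Icc_subset_Ici_self)
  have key : ∀ τ ∈ Ico (0:ℝ) t, ∀ r, -c * φ τ < r →
      ∃ᶠ z in 𝓝[>] τ, (z - τ)⁻¹ * (φ z - φ τ) < r := by
    intro τ hτ r hr
    have hτ0 : (0:ℝ) ≤ τ := hτ.1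
    set v := f (x τ) with hv
    set L := fderiv ℝ f (x τ) with hL
    set A := jac f (x τ) with hA
    set u : ℝ → (Fin n → ℝ) := fun σ => f (x σ) with hu
    have hud : HasDerivWithinAt u (L v) (Ici 0) τ :=
      ((hf.differentiable one_ne_zero (x τ)).hasFDerivAt).comp_hasDerivWithinAt τ (hx τ hτ0)
    have hslope : Tendsto (slope u τ) (𝓝[>] τ) (𝓝 (L v)) := by
      have h1 := hasDerivWithinAt_iff_tendsto_slope.1 hud
      refine h1.mono_left (nhdsWithin_mono τ ?_)
      intro z hz
      exact ⟨le_of_lt (lt_of_le_of_lt hτ0 hz), ne_of_gt hz⟩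
    -- mslope composed with (z - τ)
    have hsub : Tendsto (fun z => z - τ) (𝓝[>] τ) (𝓝[>] (0:ℝ)) := by
      rw [tendsto_nhdsWithin_iff]
      constructor
      · have h0 : Tendsto (fun z : ℝ => z - τ) (𝓝 τ) (𝓝 (τ - τ)) :=
          (continuous_id.sub continuous_const).tendsto τ
        rw [sub_self] at h0
        exact h0.mono_left nhdsWithin_le_nhds
      · filter_upwards [self_mem_nhdsWithin] with z hz
        simpa [sub_pos] using hz
    obtain ⟨htendμ, -⟩ := matMeasure_tendsto hN A hne
    have hms : Tendsto (fun z => mslope N A (z - τ)) (𝓝[>] τ) (𝓝 (matMeasure N A)) :=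
      htendμ.comp hsub
    have herr : Tendsto (fun z => N (slope u τ z - L v)) (𝓝[>] τ) (𝓝 (0:ℝ)) := by
      have h2 : Tendsto (fun z => slope u τ z - L v) (𝓝[>] τ) (𝓝 0) := by
        have := hslope.sub (tendsto_const_nhds (x := L v))
        simpa using this
      have := (hN.continuous.tendsto 0).comp h2
      rwa [hN.zero] at this
    -- the RHS tends to matMeasure * N v ≤ -c * N v < r
    have hRHS : Tendsto (fun z => mslope N A (z - τ) * N v + N (slope u τ z - L v))
        (𝓝[>] τ) (𝓝 (matMeasure N A * N v + 0)) := (hms.mul_const _).add herr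
    have hlim_lt : matMeasure N A * N v + 0 < r := by
      have h3 : matMeasure N A * N v ≤ -c * N v :=
        mul_le_mul_of_nonneg_right (hμ (x τ)) (hN.nonneg v)
      simpa using h3.trans_lt hr
    have hev : ∀ᶠ z in 𝓝[>] τ,
        mslope N A (z - τ) * N v + N (slope u τ z - L v) < r :=
      hRHS.eventually (Filter.Tendsto.eventually_lt_const hlim_lt tendsto_id) |>.mono fun z hz => hz
    -- pointwise bound: slope of φ ≤ RHS
    have hptwise : ∀ z ∈ Ioi τ,
        (z - τ)⁻¹ * (φ z - φ τ) ≤ mslope N A (z - τ) * N v + N (slope u τ z - L v) := by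
      intro z hz
      set h := z - τ with hh
      have hhpos : 0 < h := sub_pos.2 hz
      have huz : u z = v + h • slope u τ z := by
        rw [slope_def_module, smul_smul, mul_inv_cancel₀ hhpos.ne', one_smul]
        show u z = u τ + (u z - u τ)
        abel
      have hdecomp : u z = (v + h • L v) + h • (slope u τ z - L v) := by
        rw [huz]; module
      have h4 : N (u z) ≤ N (v + h • L v) + N (h • (slope u τ z - L v)) := by
        rw [hdecomp]; exact hN.2.2 _ _
      have h5 : N (v + h • L v) ≤ opNorm N (1 + h • A) * N v := by
        have := N_mulVec_le hN (1 + h • A) v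
        rwa [one_add_smul_mulVec, jac_mulVec] at this
      have h6 : N (h • (slope u τ z - L v)) = h * N (slope u τ z - L v) := by
        rw [hN.2.1, abs_of_pos hhpos]
      have h7 : φ z - φ τ ≤ (opNorm N (1 + h • A) - 1) * N v + h * N (slope u τ z - L v) := by
        have : φ z = N (u z) := rfl
        have hφτ : φ τ = N v := rfl
        rw [this, hφτ]
        nlinarith [h4, h5, h6]
      have h8 : (z - τ)⁻¹ * (φ z - φ τ)
          ≤ h⁻¹ * ((opNorm N (1 + h • A) - 1) * N v + h * N (slope u τ z - L v)) := by
        rw [← hh]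
        exact mul_le_mul_of_nonneg_left h7 (inv_nonneg.2 hhpos.le)
      refine h8.trans (le_of_eq ?_)
      show h⁻¹ * _ = (opNorm N (1 + h • A) - 1) / h * N v + N (slope u τ z - L v)
      field_simp
    refine (hev.and (eventually_mem_nhdsWithin)).mono (fun z hz => ?_) |>.frequently
    exact lt_of_le_of_lt (hptwise z hz.2) hz.1
  -- Grönwall
  have := le_gronwallBound_of_liminf_deriv_right_le (f := φ) (f' := fun τ => -c * φ τ)
    (δ := φ 0) (K := -c) (ε := 0) (a := 0) (b := t) hφc key le_rfl
    (fun τ _ => by simp) t ⟨ht, le_rfl⟩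
  rwa [sub_zero, gronwallBound_ε0] at this

end Aux

/-- `V(x) = |f(x)|` is a positive definite, radially unbounded Lyapunov function
decreasing exponentially along trajectories. -/
theorem stmt_11 {n : ℕ} (N : (Fin n → ℝ) → ℝ) (hN : IsNorm N)
    (f : (Fin n → ℝ) → (Fin n → ℝ)) (hf : ContDiff ℝ 1 f)
    (c : ℝ) (hc : 0 < c) (hμ : ∀ x, matMeasure N (jac f x) ≤ -c)
    (hbij : Function.Bijective f) (xs : Fin n → ℝ) (hxs : f xs = 0) :
    N (f xs) = 0 ∧
    (∀ x, x ≠ xs → 0 < N (f x)) ∧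
    (∀ M : ℝ, ∃ R : ℝ, ∀ x, R ≤ N x → M ≤ N (f x)) ∧
    (∀ x : ℝ → (Fin n → ℝ),
      (∀ t ∈ Ici (0:ℝ), HasDerivWithinAt x (f (x t)) (Ici 0) t) →
      ∀ t ∈ Ici (0:ℝ), N (f (x t)) ≤ N (f (x 0)) * Real.exp (-c * t)) := by
  have hinj : ∀ a : Fin n → ℝ, Function.Injective (fderiv ℝ f a) := by
    intro a w w' hww
    by_contra hne
    have hsub : w - w' ≠ 0 := sub_ne_zero.2 hne
    have hzero : (jac f a).mulVec (w - w') = 0 := by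
      rw [jac_mulVec, map_sub, hww, sub_self]
    exact mulVec_ne_zero hN (jac f a) (lt_of_le_of_lt (hμ a) (by linarith)) hsub hzero
  refine ⟨by rw [hxs, hN.zero], ?_, ?_, ?_⟩
  · intro x hx
    have hfx : f x ≠ 0 := fun h => hx (hbij.1 (h.trans hxs.symm))
    exact (hN.nonneg (f x)).lt_of_ne fun h => hfx ((hN.1 (f x)).1 h.symm)
  · intro M
    obtain ⟨ε, hε0, hε⟩ := hN.const_mul_le
    exact radially_unbounded hN hf hinj hbij hN.continuous ε hε0 hε M
  · intro x hx t ht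
    rcases isEmpty_or_nonempty (Fin n) with hempty | hne
    · haveI : Unique (Fin n → ℝ) := Pi.uniqueOfIsEmpty _
      have h1 : f (x t) = 0 := Subsingleton.elim _ _
      have h2 : f (x 0) = 0 := Subsingleton.elim _ _
      rw [h1, h2, hN.zero, zero_mul]
    · exact decay hN hf hc hμ hne x hx t ht
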